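/- Let f : ℝ → ℝ be a C² function with f(x) > 0 for all x, let h ∈ ℝ, and let t, σ : ℝ → ℝ be C¹ functions satisfying, for all s, t'(s) = cos σ(s) and σ'(s) = h − (f'(t(s))/f(t(s)))·sin σ(s). If cos σ(s₀) = 0 for some s₀ ∈ ℝ (i.e. s₀ is a critical point of t), then for all s ∈ ℝ one has t(s₀ + s) = t(s₀ − s), sin σ(s₀ + s) = sin σ(s₀ − s), and cos σ(s₀ + s) = −cos σ(s₀ − s). -/

import Mathlib

open Set

private lemma my_uniq (F : ℝ × ℝ → ℝ × ℝ) (hF : ContDiff ℝ 1 F) (X Y : ℝ → ℝ × ℝ)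
    (hX : ∀ u, HasDerivAt X (F (X u)) u) (hY : ∀ u, HasDerivAt Y (F (Y u)) u)
    (h0 : X 0 = Y 0) : ∀ b, 0 ≤ b → X b = Y b := by
  intro b hb
  obtain ⟨R₁, hR₁⟩ := (isCompact_Icc : IsCompact (Icc (0:ℝ) b)).exists_bound_of_continuousOn
    (fun u _ => (hX u).continuousAt.continuousWithinAt)
  obtain ⟨R₂, hR₂⟩ := (isCompact_Icc : IsCompact (Icc (0:ℝ) b)).exists_bound_of_continuousOn
    (fun u _ => (hY u).continuousAt.continuousWithinAt)
  set R : ℝ := max R₁ R₂ with hR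
  set K : Set (ℝ × ℝ) := Metric.closedBall 0 R with hK
  have hcont : Continuous fun x => fderiv ℝ F x := hF.continuous_fderiv one_ne_zero
  obtain ⟨C, hC⟩ := (isCompact_closedBall (0 : ℝ × ℝ) R).exists_bound_of_continuousOn
    hcont.continuousOn
  have hlip : LipschitzOnWith C.toNNReal F K := by
    apply (convex_closedBall (0 : ℝ × ℝ) R).lipschitzOnWith_of_nnnorm_hasFDerivWithin_le
      (f' := fun x => fderiv ℝ F x)
      (fun x hx => (hF.differentiable one_ne_zero x).hasFDerivAt.hasFDerivWithinAt)
    intro x hx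
    have h1 : ‖fderiv ℝ F x‖ ≤ C := hC x hx
    have : (C.toNNReal : ℝ) = max C 0 := Real.coe_toNNReal' C
    rw [← NNReal.coe_le_coe, coe_nnnorm, this]
    exact le_trans h1 (le_max_left _ _)
  have key : EqOn X Y (Icc 0 b) := by
    apply ODE_solution_unique_of_mem_Icc_right (v := fun _ => F) (s := fun _ => K)
      (fun _ _ => hlip)
      (fun u _ => (hX u).continuousAt.continuousWithinAt)
      (fun u _ => (hX u).hasDerivWithinAt) ?_
      (fun u _ => (hY u).continuousAt.continuousWithinAt)
      (fun u _ => (hY u).hasDerivWithinAt) ?_ h0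
    · intro u hu
      simp only [hK, Metric.mem_closedBall, dist_zero_right]
      exact le_trans (hR₁ u (Ico_subset_Icc_self hu)) (le_max_left _ _)
    · intro u hu
      simp only [hK, Metric.mem_closedBall, dist_zero_right]
      exact le_trans (hR₂ u (Ico_subset_Icc_self hu)) (le_max_right _ _)
  exact key ⟨hb, le_refl b⟩


/-- A constant geodesic curvature curve is symmetric with respect to any
critical point of its `t`-coordinate (Remark 1.2). -/
theorem stmt_1 (f : ℝ → ℝ) (hf : ContDiff ℝ 2 f) (hfpos : ∀ x, 0 < f x) (h : ℝ)
    (t σ : ℝ → ℝ) (ht : ContDiff ℝ 1 t) (hσ : ContDiff ℝ 1 σ)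
    (heq1 : ∀ s, deriv t s = Real.cos (σ s))
    (heq2 : ∀ s, deriv σ s = h - (deriv f (t s) / f (t s)) * Real.sin (σ s))
    (s₀ : ℝ) (hcrit : Real.cos (σ s₀) = 0) :
    ∀ s : ℝ, t (s₀ + s) = t (s₀ - s) ∧
      Real.sin (σ (s₀ + s)) = Real.sin (σ (s₀ - s)) ∧
      Real.cos (σ (s₀ + s)) = -Real.cos (σ (s₀ - s)) := by
  set a : ℝ := σ s₀ with ha
  have hcos2 : Real.cos (2 * a) = -1 := by
    rw [Real.cos_two_mul, ← ha] at *
    rw [hcrit]; norm_num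
  have hsin2 : Real.sin (2 * a) = 0 := by
    rw [Real.sin_two_mul, ← ha] at *
    rw [hcrit]; ring
  have hcosr : ∀ x : ℝ, Real.cos (2 * a - x) = -Real.cos x := by
    intro x; rw [Real.cos_sub, hcos2, hsin2]; ring
  have hsinr : ∀ x : ℝ, Real.sin (2 * a - x) = Real.sin x := by
    intro x; rw [Real.sin_sub, hcos2, hsin2]; ring
  -- derivative facts
  have htd : ∀ u, HasDerivAt t (Real.cos (σ u)) u := fun u =>
    heq1 u ▸ (ht.differentiable one_ne_zero u).hasDerivAt
  have hσd : ∀ u, HasDerivAt σ (h - (deriv f (t u) / f (t u)) * Real.sin (σ u)) u := fun u =>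
    heq2 u ▸ (hσ.differentiable one_ne_zero u).hasDerivAt
  -- the vector field
  set F : ℝ × ℝ → ℝ × ℝ :=
    fun p => (Real.cos p.2, h - (deriv f p.1 / f p.1) * Real.sin p.2) with hFdef
  have hdf : ContDiff ℝ 1 (deriv f) := by
    have h2 : (2 : WithTop ℕ∞) = 1 + 1 := by norm_num
    rw [h2] at hf
    exact (contDiff_succ_iff_deriv.mp hf).2.2
  have hg : ContDiff ℝ 1 fun x => deriv f x / f x :=
    hdf.div (hf.of_le (by norm_num)) fun x => (hfpos x).ne'
  have hF : ContDiff ℝ 1 F := by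
    apply ContDiff.prodMk
    · exact Real.contDiff_cos.comp contDiff_snd
    · exact contDiff_const.sub ((hg.comp contDiff_fst).mul
        (Real.contDiff_sin.comp contDiff_snd))
  -- the two solutions
  set X : ℝ → ℝ × ℝ := fun u => (t (s₀ + u), σ (s₀ + u)) with hXdef
  set Y : ℝ → ℝ × ℝ := fun u => (t (s₀ - u), 2 * a - σ (s₀ - u)) with hYdef
  have hinner1 : ∀ u : ℝ, HasDerivAt (fun u : ℝ => s₀ + u) 1 u := fun u =>
    (hasDerivAt_id u).const_add s₀
  have hinner2 : ∀ u : ℝ, HasDerivAt (fun u : ℝ => s₀ - u) (-1) u := fun u =>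
    (hasDerivAt_id u).const_sub s₀
  have hX : ∀ u, HasDerivAt X (F (X u)) u := by
    intro u
    apply HasDerivAt.prodMk
    · convert (htd (s₀ + u)).comp u (hinner1 u) using 1
      · rfl
      · rfl
      · simp [hXdef]
    · convert (hσd (s₀ + u)).comp u (hinner1 u) using 1
      · rfl
      · rfl
      · simp [hXdef]
  have hY : ∀ u, HasDerivAt Y (F (Y u)) u := by
    intro u
    apply HasDerivAt.prodMk
    · have := (htd (s₀ - u)).comp u (hinner2 u)
      simp only [hFdef, hYdef, hcosr]
      convert this using 1
      · rfl
      · rfl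
      ring
    · have := ((hσd (s₀ - u)).comp u (hinner2 u)).const_sub (2 * a)
      simp only [hFdef, hYdef, hsinr]
      convert this using 1
      · rfl
      ring
  have h0 : X 0 = Y 0 := by
    simp only [hXdef, hYdef, add_zero, sub_zero]
    exact Prod.ext rfl (by rw [← ha]; ring)
  have main : ∀ b, 0 ≤ b → X b = Y b := my_uniq F hF X Y hX hY h0
  intro s
  rcases le_or_gt 0 s with hs | hs
  · have := main s hs
    have h1 : t (s₀ + s) = t (s₀ - s) := congrArg Prod.fst this
    have h2 : σ (s₀ + s) = 2 * a - σ (s₀ - s) := congrArg Prod.snd this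
    exact ⟨h1, by rw [h2, hsinr], by rw [h2, hcosr]⟩
  · have := main (-s) (by linarith)
    simp only [hXdef, hYdef, sub_neg_eq_add] at this
    have h1 : t (s₀ + -s) = t (s₀ + s) := congrArg Prod.fst this
    have h2 : σ (s₀ + -s) = 2 * a - σ (s₀ + s) := congrArg Prod.snd this
    have e1 : s₀ + -s = s₀ - s := by ring
    rw [e1] at h1 h2
    refine ⟨h1.symm, ?_, ?_⟩
    · rw [h2, hsinr]
    · rw [h2, hcosr]; ring
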